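/- Let a, b ≥ 0 be real numbers satisfying 2a + 1 ≥ b, b ≥ (a−1)/2, and (a−1)/2 ≥ −b/2, and set c = (a+b+1)/2. Then for all real x, y, z ≥ 0, (x^c + y^c + z^c)² ≥ (x + y + z)(x^a y^b + y^a z^b + z^a x^b). -/
import Mathlib

open Real

private lemma radd {x p q : ℝ} (hx : 0 ≤ x) (hp : 0 ≤ p) (hq : 0 ≤ q) :
    x ^ (p + q) = x ^ p * x ^ q := by
  rcases eq_or_ne (p + q) 0 with h | h
  · have hp0 : p = 0 := by linarith
    have hq0 : q = 0 := by linarith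
    simp [hp0, hq0]
  · exact Real.rpow_add' hx h

private lemma amgm6 (x1 x2 x3 x4 x5 x6 w1 w2 w3 w4 w5 w6 : ℝ)
    (hx1 : 0 ≤ x1) (hx2 : 0 ≤ x2) (hx3 : 0 ≤ x3)
    (hx4 : 0 ≤ x4) (hx5 : 0 ≤ x5) (hx6 : 0 ≤ x6)
    (hw1 : 0 ≤ w1) (hw2 : 0 ≤ w2) (hw3 : 0 ≤ w3)
    (hw4 : 0 ≤ w4) (hw5 : 0 ≤ w5) (hw6 : 0 ≤ w6)
    (hw : w1 + w2 + w3 + w4 + w5 + w6 = 1) :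
    x1 ^ w1 * x2 ^ w2 * x3 ^ w3 * x4 ^ w4 * x5 ^ w5 * x6 ^ w6 ≤
      w1 * x1 + w2 * x2 + w3 * x3 + w4 * x4 + w5 * x5 + w6 * x6 := by
  have h := Real.geom_mean_le_arith_mean_weighted Finset.univ
      ![w1, w2, w3, w4, w5, w6] ![x1, x2, x3, x4, x5, x6]
      (by intro i _; fin_cases i <;> assumption)
      (by rw [Fin.sum_univ_six]; simpa using hw)
      (by intro i _; fin_cases i <;> assumption)
  rw [Fin.prod_univ_six, Fin.sum_univ_six] at h
  simpa using h

private lemma master (c s e1 e2 e3 n1 n2 n3 n4 n5 n6 x y z : ℝ)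
    (hc : 0 < c) (hs : 0 < s)
    (hn1 : 0 ≤ n1) (hn2 : 0 ≤ n2) (hn3 : 0 ≤ n3)
    (hn4 : 0 ≤ n4) (hn5 : 0 ≤ n5) (hn6 : 0 ≤ n6)
    (hsum : n1 + n2 + n3 + n4 + n5 + n6 = s)
    (he1 : 2*c*n1 + c*n4 + c*n6 = e1 * s)
    (he2 : 2*c*n2 + c*n4 + c*n5 = e2 * s)
    (he3 : 2*c*n3 + c*n5 + c*n6 = e3 * s)
    (hx : 0 ≤ x) (hy : 0 ≤ y) (hz : 0 ≤ z) :
    s * (x ^ e1 * y ^ e2 * z ^ e3) ≤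
      n1 * x ^ (2*c) + n2 * y ^ (2*c) + n3 * z ^ (2*c)
      + n4 * (x ^ c * y ^ c) + n5 * (y ^ c * z ^ c) + n6 * (x ^ c * z ^ c) := by
  have hsne : s ≠ 0 := ne_of_gt hs
  have hw1 : 0 ≤ n1 / s := div_nonneg hn1 hs.le
  have hw2 : 0 ≤ n2 / s := div_nonneg hn2 hs.le
  have hw3 : 0 ≤ n3 / s := div_nonneg hn3 hs.le
  have hw4 : 0 ≤ n4 / s := div_nonneg hn4 hs.le
  have hw5 : 0 ≤ n5 / s := div_nonneg hn5 hs.le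
  have hw6 : 0 ≤ n6 / s := div_nonneg hn6 hs.le
  have hc2 : (0:ℝ) ≤ 2 * c := by linarith
  have hwsum : n1/s + n2/s + n3/s + n4/s + n5/s + n6/s = 1 := by
    field_simp
    linarith
  have he1' : 2*c*(n1/s) + c*(n4/s) + c*(n6/s) = e1 := by
    field_simp
    linear_combination he1
  have he2' : 2*c*(n2/s) + c*(n4/s) + c*(n5/s) = e2 := by
    field_simp
    linear_combination he2
  have he3' : 2*c*(n3/s) + c*(n5/s) + c*(n6/s) = e3 := by
    field_simp
    linear_combination he3
  have hA1 : 0 ≤ x ^ (2*c) := Real.rpow_nonneg hx _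
  have hA2 : 0 ≤ y ^ (2*c) := Real.rpow_nonneg hy _
  have hA3 : 0 ≤ z ^ (2*c) := Real.rpow_nonneg hz _
  have hA4 : 0 ≤ x ^ c * y ^ c := mul_nonneg (Real.rpow_nonneg hx _) (Real.rpow_nonneg hy _)
  have hA5 : 0 ≤ y ^ c * z ^ c := mul_nonneg (Real.rpow_nonneg hy _) (Real.rpow_nonneg hz _)
  have hA6 : 0 ≤ x ^ c * z ^ c := mul_nonneg (Real.rpow_nonneg hx _) (Real.rpow_nonneg hz _)
  have hgm := amgm6 (x ^ (2*c)) (y ^ (2*c)) (z ^ (2*c))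
      (x ^ c * y ^ c) (y ^ c * z ^ c) (x ^ c * z ^ c)
      (n1/s) (n2/s) (n3/s) (n4/s) (n5/s) (n6/s)
      hA1 hA2 hA3 hA4 hA5 hA6 hw1 hw2 hw3 hw4 hw5 hw6 hwsum
  have hxe : x ^ e1 = x ^ (2*c*(n1/s)) * x ^ (c*(n4/s)) * x ^ (c*(n6/s)) := by
    calc x ^ e1 = x ^ (2*c*(n1/s) + c*(n4/s) + c*(n6/s)) := by rw [he1']
    _ = x ^ (2*c*(n1/s) + c*(n4/s)) * x ^ (c*(n6/s)) :=
        radd hx (by positivity) (by positivity)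
    _ = x ^ (2*c*(n1/s)) * x ^ (c*(n4/s)) * x ^ (c*(n6/s)) := by
        rw [radd hx (by positivity) (by positivity)]
  have hye : y ^ e2 = y ^ (2*c*(n2/s)) * y ^ (c*(n4/s)) * y ^ (c*(n5/s)) := by
    calc y ^ e2 = y ^ (2*c*(n2/s) + c*(n4/s) + c*(n5/s)) := by rw [he2']
    _ = y ^ (2*c*(n2/s) + c*(n4/s)) * y ^ (c*(n5/s)) :=
        radd hy (by positivity) (by positivity)
    _ = y ^ (2*c*(n2/s)) * y ^ (c*(n4/s)) * y ^ (c*(n5/s)) := by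
        rw [radd hy (by positivity) (by positivity)]
  have hze : z ^ e3 = z ^ (2*c*(n3/s)) * z ^ (c*(n5/s)) * z ^ (c*(n6/s)) := by
    calc z ^ e3 = z ^ (2*c*(n3/s) + c*(n5/s) + c*(n6/s)) := by rw [he3']
    _ = z ^ (2*c*(n3/s) + c*(n5/s)) * z ^ (c*(n6/s)) :=
        radd hz (by positivity) (by positivity)
    _ = z ^ (2*c*(n3/s)) * z ^ (c*(n5/s)) * z ^ (c*(n6/s)) := by
        rw [radd hz (by positivity) (by positivity)]
  have h1 : (x ^ (2*c)) ^ (n1/s) = x ^ (2*c*(n1/s)) := (Real.rpow_mul hx _ _).symm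
  have h2 : (y ^ (2*c)) ^ (n2/s) = y ^ (2*c*(n2/s)) := (Real.rpow_mul hy _ _).symm
  have h3 : (z ^ (2*c)) ^ (n3/s) = z ^ (2*c*(n3/s)) := (Real.rpow_mul hz _ _).symm
  have h4 : (x ^ c * y ^ c) ^ (n4/s) = x ^ (c*(n4/s)) * y ^ (c*(n4/s)) := by
    rw [Real.mul_rpow (Real.rpow_nonneg hx c) (Real.rpow_nonneg hy c),
      ← Real.rpow_mul hx, ← Real.rpow_mul hy]
  have h5 : (y ^ c * z ^ c) ^ (n5/s) = y ^ (c*(n5/s)) * z ^ (c*(n5/s)) := by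
    rw [Real.mul_rpow (Real.rpow_nonneg hy c) (Real.rpow_nonneg hz c),
      ← Real.rpow_mul hy, ← Real.rpow_mul hz]
  have h6 : (x ^ c * z ^ c) ^ (n6/s) = x ^ (c*(n6/s)) * z ^ (c*(n6/s)) := by
    rw [Real.mul_rpow (Real.rpow_nonneg hx c) (Real.rpow_nonneg hz c),
      ← Real.rpow_mul hx, ← Real.rpow_mul hz]
  have hprod : (x ^ (2*c)) ^ (n1/s) * (y ^ (2*c)) ^ (n2/s) * (z ^ (2*c)) ^ (n3/s)
      * (x ^ c * y ^ c) ^ (n4/s) * (y ^ c * z ^ c) ^ (n5/s) * (x ^ c * z ^ c) ^ (n6/s)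
      = x ^ e1 * y ^ e2 * z ^ e3 := by
    rw [h1, h2, h3, h4, h5, h6, hxe, hye, hze]; ring
  calc s * (x ^ e1 * y ^ e2 * z ^ e3)
      = s * ((x ^ (2*c)) ^ (n1/s) * (y ^ (2*c)) ^ (n2/s) * (z ^ (2*c)) ^ (n3/s)
        * (x ^ c * y ^ c) ^ (n4/s) * (y ^ c * z ^ c) ^ (n5/s)
        * (x ^ c * z ^ c) ^ (n6/s)) := by rw [hprod]
  _ ≤ s * (n1/s * (x ^ (2*c)) + n2/s * (y ^ (2*c)) + n3/s * (z ^ (2*c))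
        + n4/s * (x ^ c * y ^ c) + n5/s * (y ^ c * z ^ c)
        + n6/s * (x ^ c * z ^ c)) := by
      exact mul_le_mul_of_nonneg_left hgm hs.le
  _ = n1 * x ^ (2*c) + n2 * y ^ (2*c) + n3 * z ^ (2*c)
      + n4 * (x ^ c * y ^ c) + n5 * (y ^ c * z ^ c) + n6 * (x ^ c * z ^ c) := by
      field_simp

set_option maxHeartbeats 1600000 in
theorem three_var_cyclic_ineq (a b c : ℝ) (ha : 0 ≤ a) (hb : 0 ≤ b)
    (h1 : 2 * a + 1 ≥ b) (h2 : b ≥ (a - 1) / 2) (h3 : (a - 1) / 2 ≥ -b / 2)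
    (hc : c = (a + b + 1) / 2) :
    ∀ x y z : ℝ, 0 ≤ x → 0 ≤ y → 0 ≤ z →
      (x ^ c + y ^ c + z ^ c) ^ 2 ≥
        (x + y + z) * (x ^ a * y ^ b + y ^ a * z ^ b + z ^ a * x ^ b) := by
  intro x y z hx hy hz
  have hab1 : 1 ≤ a + b := by linarith
  have hs : (0:ℝ) < a + b + 1 := by linarith
  have hc0 : (0:ℝ) < c := by rw [hc]; linarith
  rw [ge_iff_le]
  have eA1 : x ^ (a+1) = x ^ a * x := by
    rw [radd hx ha zero_le_one, Real.rpow_one]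
  have eA2 : y ^ (a+1) = y ^ a * y := by
    rw [radd hy ha zero_le_one, Real.rpow_one]
  have eA3 : z ^ (a+1) = z ^ a * z := by
    rw [radd hz ha zero_le_one, Real.rpow_one]
  have eB1 : x ^ (b+1) = x ^ b * x := by
    rw [radd hx hb zero_le_one, Real.rpow_one]
  have eB2 : y ^ (b+1) = y ^ b * y := by
    rw [radd hy hb zero_le_one, Real.rpow_one]
  have eB3 : z ^ (b+1) = z ^ b * z := by
    rw [radd hz hb zero_le_one, Real.rpow_one]
  have exp2 : (x + y + z) * (x ^ a * y ^ b + y ^ a * z ^ b + z ^ a * x ^ b)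
      = x ^ (a+1) * y ^ b + y ^ (a+1) * z ^ b + z ^ (a+1) * x ^ b
      + x ^ a * y ^ (b+1) + y ^ a * z ^ (b+1) + z ^ a * x ^ (b+1)
      + x ^ a * y ^ b * z + y ^ a * z ^ b * x + z ^ a * x ^ b * y := by
    rw [eA1, eA2, eA3, eB1, eB2, eB3]; ring
  have expand : (x ^ c + y ^ c + z ^ c) ^ 2
      = x ^ (2*c) + y ^ (2*c) + z ^ (2*c)
      + 2*(x ^ c * y ^ c) + 2*(y ^ c * z ^ c) + 2*(x ^ c * z ^ c) := by
    have e1 : x ^ (2*c) = x ^ c * x ^ c := by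
      rw [two_mul]; exact radd hx hc0.le hc0.le
    have e2 : y ^ (2*c) = y ^ c * y ^ c := by
      rw [two_mul]; exact radd hy hc0.le hc0.le
    have e3 : z ^ (2*c) = z ^ c * z ^ c := by
      rw [two_mul]; exact radd hz hc0.le hc0.le
    rw [e1, e2, e3]; ring
  suffices H : (a+b+1) * ((x + y + z) * (x ^ a * y ^ b + y ^ a * z ^ b + z ^ a * x ^ b))
      ≤ (a+b+1) * ((x ^ c + y ^ c + z ^ c) ^ 2) by
    exact le_of_mul_le_mul_left H hs
  rw [exp2, expand]
  rcases le_total (b+1) a with hH | hab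
  · -- Case H : b + 1 ≤ a
    have hP1 := master c (a+b+1) (a+1) b 0 (a+1-b) 0 0 (2*b) 0 0 x y z
      hc0 hs (by linarith) le_rfl le_rfl (by linarith) le_rfl le_rfl (by ring)
      (by rw [hc]; ring) (by rw [hc]; ring) (by rw [hc]; ring) hx hy hz
    have hP2 := master c (a+b+1) (a+1) b 0 (a+1-b) 0 0 (2*b) 0 0 y z x
      hc0 hs (by linarith) le_rfl le_rfl (by linarith) le_rfl le_rfl (by ring)
      (by rw [hc]; ring) (by rw [hc]; ring) (by rw [hc]; ring) hy hz hx
    have hP3 := master c (a+b+1) (a+1) b 0 (a+1-b) 0 0 (2*b) 0 0 z x y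
      hc0 hs (by linarith) le_rfl le_rfl (by linarith) le_rfl le_rfl (by ring)
      (by rw [hc]; ring) (by rw [hc]; ring) (by rw [hc]; ring) hz hx hy
    have hT1 := master c (a+b+1) a (b+1) 0 (a-b-1) 0 0 (2*b+2) 0 0 x y z
      hc0 hs (by linarith) le_rfl le_rfl (by linarith) le_rfl le_rfl (by ring)
      (by rw [hc]; ring) (by rw [hc]; ring) (by rw [hc]; ring) hx hy hz
    have hT2 := master c (a+b+1) a (b+1) 0 (a-b-1) 0 0 (2*b+2) 0 0 y z x
      hc0 hs (by linarith) le_rfl le_rfl (by linarith) le_rfl le_rfl (by ring)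
      (by rw [hc]; ring) (by rw [hc]; ring) (by rw [hc]; ring) hy hz hx
    have hT3 := master c (a+b+1) a (b+1) 0 (a-b-1) 0 0 (2*b+2) 0 0 z x y
      hc0 hs (by linarith) le_rfl le_rfl (by linarith) le_rfl le_rfl (by ring)
      (by rw [hc]; ring) (by rw [hc]; ring) (by rw [hc]; ring) hz hx hy
    have hU1 := master c (a+b+1) a b 1 b (2*b+1-a) 0 (2*a-2*b-2) 0 2 x y z
      hc0 hs hb (by linarith) le_rfl (by linarith) le_rfl (by norm_num) (by ring)
      (by rw [hc]; ring) (by rw [hc]; ring) (by rw [hc]; ring) hx hy hz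
    have hU2 := master c (a+b+1) a b 1 b (2*b+1-a) 0 (2*a-2*b-2) 0 2 y z x
      hc0 hs hb (by linarith) le_rfl (by linarith) le_rfl (by norm_num) (by ring)
      (by rw [hc]; ring) (by rw [hc]; ring) (by rw [hc]; ring) hy hz hx
    have hU3 := master c (a+b+1) a b 1 b (2*b+1-a) 0 (2*a-2*b-2) 0 2 z x y
      hc0 hs hb (by linarith) le_rfl (by linarith) le_rfl (by norm_num) (by ring)
      (by rw [hc]; ring) (by rw [hc]; ring) (by rw [hc]; ring) hz hx hy
    simp only [Real.rpow_zero, Real.rpow_one, mul_one, mul_zero, zero_mul,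
      add_zero, zero_add] at hP1 hP2 hP3 hT1 hT2 hT3 hU1 hU2 hU3
    linarith [hP1, hP2, hP3, hT1, hT2, hT3, hU1, hU2, hU3]
  · rcases le_total (a+1) b with hL | hba
    · -- Case L : a + 1 ≤ b
      have hP1 := master c (a+b+1) (a+1) b 0 0 (b-a-1) 0 (2*a+2) 0 0 x y z
        hc0 hs le_rfl (by linarith) le_rfl (by linarith) le_rfl le_rfl (by ring)
        (by rw [hc]; ring) (by rw [hc]; ring) (by rw [hc]; ring) hx hy hz
      have hP2 := master c (a+b+1) (a+1) b 0 0 (b-a-1) 0 (2*a+2) 0 0 y z x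
        hc0 hs le_rfl (by linarith) le_rfl (by linarith) le_rfl le_rfl (by ring)
        (by rw [hc]; ring) (by rw [hc]; ring) (by rw [hc]; ring) hy hz hx
      have hP3 := master c (a+b+1) (a+1) b 0 0 (b-a-1) 0 (2*a+2) 0 0 z x y
        hc0 hs le_rfl (by linarith) le_rfl (by linarith) le_rfl le_rfl (by ring)
        (by rw [hc]; ring) (by rw [hc]; ring) (by rw [hc]; ring) hz hx hy
      have hT1 := master c (a+b+1) a (b+1) 0 0 (b+1-a) 0 (2*a) 0 0 x y z
        hc0 hs le_rfl (by linarith) le_rfl (by linarith) le_rfl le_rfl (by ring)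
        (by rw [hc]; ring) (by rw [hc]; ring) (by rw [hc]; ring) hx hy hz
      have hT2 := master c (a+b+1) a (b+1) 0 0 (b+1-a) 0 (2*a) 0 0 y z x
        hc0 hs le_rfl (by linarith) le_rfl (by linarith) le_rfl le_rfl (by ring)
        (by rw [hc]; ring) (by rw [hc]; ring) (by rw [hc]; ring) hy hz hx
      have hT3 := master c (a+b+1) a (b+1) 0 0 (b+1-a) 0 (2*a) 0 0 z x y
        hc0 hs le_rfl (by linarith) le_rfl (by linarith) le_rfl le_rfl (by ring)
        (by rw [hc]; ring) (by rw [hc]; ring) (by rw [hc]; ring) hz hx hy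
      have hU1 := master c (a+b+1) a b 1 (2*a+1-b) a 0 (2*b-2*a-2) 2 0 x y z
        hc0 hs (by linarith) ha le_rfl (by linarith) (by norm_num) le_rfl (by ring)
        (by rw [hc]; ring) (by rw [hc]; ring) (by rw [hc]; ring) hx hy hz
      have hU2 := master c (a+b+1) a b 1 (2*a+1-b) a 0 (2*b-2*a-2) 2 0 y z x
        hc0 hs (by linarith) ha le_rfl (by linarith) (by norm_num) le_rfl (by ring)
        (by rw [hc]; ring) (by rw [hc]; ring) (by rw [hc]; ring) hy hz hx
      have hU3 := master c (a+b+1) a b 1 (2*a+1-b) a 0 (2*b-2*a-2) 2 0 z x y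
        hc0 hs (by linarith) ha le_rfl (by linarith) (by norm_num) le_rfl (by ring)
        (by rw [hc]; ring) (by rw [hc]; ring) (by rw [hc]; ring) hz hx hy
      simp only [Real.rpow_zero, Real.rpow_one, mul_one, mul_zero, zero_mul,
        add_zero, zero_add] at hP1 hP2 hP3 hT1 hT2 hT3 hU1 hU2 hU3
      linarith [hP1, hP2, hP3, hT1, hT2, hT3, hU1, hU2, hU3]
    · -- Case M : a ≤ b + 1 and b ≤ a + 1
      have hP1 := master c (a+b+1) (a+1) b 0 ((3*a+1-b)/2) ((a+b-1)/2) 0 (b+1-a) 0 0 x y z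
        hc0 hs (by linarith) (by linarith) le_rfl (by linarith) le_rfl le_rfl (by ring)
        (by rw [hc]; ring) (by rw [hc]; ring) (by rw [hc]; ring) hx hy hz
      have hP2 := master c (a+b+1) (a+1) b 0 ((3*a+1-b)/2) ((a+b-1)/2) 0 (b+1-a) 0 0 y z x
        hc0 hs (by linarith) (by linarith) le_rfl (by linarith) le_rfl le_rfl (by ring)
        (by rw [hc]; ring) (by rw [hc]; ring) (by rw [hc]; ring) hy hz hx
      have hP3 := master c (a+b+1) (a+1) b 0 ((3*a+1-b)/2) ((a+b-1)/2) 0 (b+1-a) 0 0 z x y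
        hc0 hs (by linarith) (by linarith) le_rfl (by linarith) le_rfl le_rfl (by ring)
        (by rw [hc]; ring) (by rw [hc]; ring) (by rw [hc]; ring) hz hx hy
      have hT1 := master c (a+b+1) a (b+1) 0 0 (b+1-a) 0 (2*a) 0 0 x y z
        hc0 hs le_rfl (by linarith) le_rfl (by linarith) le_rfl le_rfl (by ring)
        (by rw [hc]; ring) (by rw [hc]; ring) (by rw [hc]; ring) hx hy hz
      have hT2 := master c (a+b+1) a (b+1) 0 0 (b+1-a) 0 (2*a) 0 0 y z x
        hc0 hs le_rfl (by linarith) le_rfl (by linarith) le_rfl le_rfl (by ring)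
        (by rw [hc]; ring) (by rw [hc]; ring) (by rw [hc]; ring) hy hz hx
      have hT3 := master c (a+b+1) a (b+1) 0 0 (b+1-a) 0 (2*a) 0 0 z x y
        hc0 hs le_rfl (by linarith) le_rfl (by linarith) le_rfl le_rfl (by ring)
        (by rw [hc]; ring) (by rw [hc]; ring) (by rw [hc]; ring) hz hx hy
      have hU1 := master c (a+b+1) a b 1 0 0 0 (a+b-1) (b+1-a) (a+1-b) x y z
        hc0 hs le_rfl le_rfl le_rfl (by linarith) (by linarith) (by linarith) (by ring)
        (by rw [hc]; ring) (by rw [hc]; ring) (by rw [hc]; ring) hx hy hz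
      have hU2 := master c (a+b+1) a b 1 0 0 0 (a+b-1) (b+1-a) (a+1-b) y z x
        hc0 hs le_rfl le_rfl le_rfl (by linarith) (by linarith) (by linarith) (by ring)
        (by rw [hc]; ring) (by rw [hc]; ring) (by rw [hc]; ring) hy hz hx
      have hU3 := master c (a+b+1) a b 1 0 0 0 (a+b-1) (b+1-a) (a+1-b) z x y
        hc0 hs le_rfl le_rfl le_rfl (by linarith) (by linarith) (by linarith) (by ring)
        (by rw [hc]; ring) (by rw [hc]; ring) (by rw [hc]; ring) hz hx hy
      simp only [Real.rpow_zero, Real.rpow_one, mul_one, mul_zero, zero_mul,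
        add_zero, zero_add] at hP1 hP2 hP3 hT1 hT2 hT3 hU1 hU2 hU3
      linarith [hP1, hP2, hP3, hT1, hT2, hT3, hU1, hU2, hU3]
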